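/- Let P and Q be monotone-constraint programs with At(P) ∪ At(Q) finite. Then P and Q are uniformly equivalent if and only if UE(P) = UE(Q). -/

import Mathlib

universe u

/-- A constraint `A = (X, C)`: domain `X` and a family `C` of subsets of `X`. -/
structure Constraint (α : Type u) where
  dom : Set α
  sat : Set (Set α)
  sat_sub : ∀ Y ∈ sat, Y ⊆ dom

/-- `M ⊨ A` iff `M ∩ Dom(A) ∈ C`. -/
def Constraint.Sat {α : Type u} (M : Set α) (A : Constraint α) : Prop :=
  M ∩ A.dom ∈ A.sat

/-- A constraint is monotone if its satisfying family is closed under supersets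
within the domain. -/
def Constraint.Mono {α : Type u} (A : Constraint α) : Prop :=
  ∀ W Y : Set α, W ∈ A.sat → W ⊆ Y → Y ⊆ A.dom → Y ∈ A.sat

/-- A rule `A ← A₁,…,A_k, not(A_{k+1}),…,not(A_m)`. -/
structure Rule (α : Type u) where
  head : Constraint α
  pos : Set (Constraint α)
  neg : Set (Constraint α)

/-- A constraint program is a set of rules. -/
abbrev Program (α : Type u) := Set (Rule α)

def Rule.Horn {α : Type u} (r : Rule α) : Prop := r.neg = ∅

def Rule.Mono {α : Type u} (r : Rule α) : Prop :=
  r.head.Mono ∧ (∀ A ∈ r.pos, A.Mono) ∧ (∀ A ∈ r.neg, A.Mono)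

def Program.Horn {α : Type u} (P : Program α) : Prop := ∀ r ∈ P, r.Horn

def Program.Mono {α : Type u} (P : Program α) : Prop := ∀ r ∈ P, r.Mono

/-- `M` satisfies the body of `r`. -/
def Rule.BodySat {α : Type u} (M : Set α) (r : Rule α) : Prop :=
  (∀ A ∈ r.pos, Constraint.Sat M A) ∧ (∀ A ∈ r.neg, ¬ Constraint.Sat M A)

/-- `P(M)`: the set of `M`-applicable rules of `P`. -/
def Program.app {α : Type u} (P : Program α) (M : Set α) : Program α :=
  {r ∈ P | r.BodySat M}

/-- `hset(r) = Dom(hd(r))`. -/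
def Rule.hset {α : Type u} (r : Rule α) : Set α := r.head.dom

/-- `hset(P)`: union of the headsets of rules of `P`. -/
def Program.hset {α : Type u} (P : Program α) : Set α := ⋃ r ∈ P, r.hset

def Rule.atoms {α : Type u} (r : Rule α) : Set α :=
  r.head.dom ∪ (⋃ A ∈ r.pos, A.dom) ∪ (⋃ A ∈ r.neg, A.dom)

/-- `At(P)`: atoms occurring in domains of constraints of `P`. -/
def Program.atoms {α : Type u} (P : Program α) : Set α := ⋃ r ∈ P, r.atoms

/-- `M` is a model of `P`. -/
def Program.IsModel {α : Type u} (P : Program α) (M : Set α) : Prop :=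
  ∀ r ∈ P, r.BodySat M → Constraint.Sat M r.head

/-- `M` is a supported model of `P`. -/
def Program.Supported {α : Type u} (P : Program α) (M : Set α) : Prop :=
  P.IsModel M ∧ M ⊆ (P.app M).hset

/-- The nondeterministic one-step provability operator `T_P^nd`. -/
def Program.Tnd {α : Type u} (P : Program α) (M : Set α) : Set (Set α) :=
  {M' | M' ⊆ (P.app M).hset ∧ ∀ r ∈ P.app M, Constraint.Sat M' r.head}

/-- A `P`-computation: a transfinite sequence starting at `∅`, increasing, with
each successor step nondeterministically one-step provable, continuous at limits. -/
structure PComputation {α : Type u} (P : Program α) where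
  X : Ordinal.{u} → Set α
  zero : X 0 = ∅
  incr : ∀ o, X o ⊆ X (o + 1)
  step : ∀ o, X (o + 1) ∈ P.Tnd (X o)
  limit : ∀ o : Ordinal.{u}, Order.IsSuccLimit o → X o = ⋃ β < o, X β

/-- The result `R_t` of a computation. -/
def PComputation.result {α : Type u} {P : Program α} (t : PComputation P) : Set α :=
  ⋃ o, t.X o

/-- `M` is a derivable model of `P`: the result of some `P`-computation. -/
def Program.Derivable {α : Type u} (P : Program α) (M : Set α) : Prop :=
  ∃ t : PComputation P, t.result = M

/-- The canonical sequence `t^{P,M}`: `X₀ = ∅`, `X_{β+1} = hset(P(X_β)) ∩ M`,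
unions at limits. -/
noncomputable def canSeq {α : Type u} (P : Program α) (M : Set α) (o : Ordinal.{u}) :
    Set α :=
  Ordinal.limitRecOn o ∅ (fun _ ih => (P.app ih).hset ∩ M)
    (fun o _ ih => ⋃ β : Ordinal.{u}, ⋃ h : β < o, ih β h)

/-- `Can(P,M)`: the result of the canonical computation. -/
noncomputable def Can {α : Type u} (P : Program α) (M : Set α) : Set α :=
  ⋃ o, canSeq P M o

/-- The reduct of a single rule: drop negated literals. -/
def Rule.pos_part {α : Type u} (r : Rule α) : Rule α := ⟨r.head, r.pos, ∅⟩

/-- The reduct `P^M`. -/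
def Program.reduct {α : Type u} (P : Program α) (M : Set α) : Program α :=
  {r' | ∃ r ∈ P, (∀ A ∈ r.neg, ¬ Constraint.Sat M A) ∧ r' = r.pos_part}

/-- `M` is a stable model of `P`: a derivable model of the reduct `P^M`. -/
def Program.Stable {α : Type u} (P : Program α) (M : Set α) : Prop :=
  (P.reduct M).Derivable M

/-- `N ⊨_M P`: `N` is an `M`-maximal model of the Horn program `P`. -/
def Program.MMax {α : Type u} (P : Program α) (M N : Set α) : Prop :=
  N ⊆ M ∧ P.IsModel N ∧ M ∩ (P.app N).hset ⊆ N

/-- `(X,Y)` is an SE-model of `P`. -/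
def Program.SE {α : Type u} (P : Program α) (X Y : Set α) : Prop :=
  X ⊆ Y ∧ P.IsModel Y ∧ (P.reduct Y).MMax Y X

/-- `(X,Y)` is a UE-model of `P`. -/
def Program.UE {α : Type u} (P : Program α) (X Y : Set α) : Prop :=
  P.SE X Y ∧ ∀ X', P.SE X' Y → X ⊆ X' → X = X' ∨ X' = Y

/-- Strong equivalence of monotone-constraint programs. -/
def StrongEq {α : Type u} (P Q : Program α) : Prop :=
  ∀ R : Program α, R.Mono → ∀ M : Set α, (P ∪ R).Stable M ↔ (Q ∪ R).Stable M

/-- The rule `(D,{D}) ←`. -/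
def factRule {α : Type u} (D : Set α) : Rule α :=
  ⟨⟨D, {D}, fun Y hY => by simp only [Set.mem_singleton_iff] at hY; simp [hY]⟩, ∅, ∅⟩

/-- Uniform equivalence of monotone-constraint programs. -/
def UnifEq {α : Type u} (P Q : Program α) : Prop :=
  ∀ D : Set α, ∀ M : Set α,
    (P ∪ {factRule D}).Stable M ↔ (Q ∪ {factRule D}).Stable M

/-- `P` is tight on `M`. -/
def Program.Tight {α : Type u} (P : Program α) (M : Set α) : Prop :=
  ∃ lam : α → Ordinal.{u}, ∀ r ∈ P.app M, ∀ x ∈ M ∩ r.hset,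
    ∀ a ∈ M ∩ (⋃ A ∈ r.pos, A.dom), lam a < lam x



/-! ### Auxiliary lemmas -/

section Aux

variable {α : Type u}

lemma sat_congr {C : Constraint α} {M N : Set α} (h : M ∩ C.dom = N ∩ C.dom) :
    Constraint.Sat M C ↔ Constraint.Sat N C := by
  unfold Constraint.Sat; rw [h]

lemma sat_mono {C : Constraint α} (hC : C.Mono) {M N : Set α} (h : M ⊆ N)
    (hs : Constraint.Sat M C) : Constraint.Sat N C :=
  hC _ _ hs (Set.inter_subset_inter_left _ h) Set.inter_subset_right

lemma bodySat_mono {r : Rule α} (hH : r.neg = ∅) (hm : ∀ A ∈ r.pos, A.Mono)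
    {M N : Set α} (hMN : M ⊆ N) (h : r.BodySat M) : r.BodySat N :=
  ⟨fun A hA => sat_mono (hm A hA) hMN (h.1 A hA), by
    rw [hH]; intro A hA; exact absurd hA (Set.notMem_empty A)⟩

lemma app_mono {P : Program α} (hH : P.Horn) (hm : P.Mono) {M N : Set α}
    (h : M ⊆ N) : P.app M ⊆ P.app N :=
  fun r hr => ⟨hr.1, bodySat_mono (hH r hr.1) (hm r hr.1).2.1 h hr.2⟩

lemma rule_hset_subset {P : Program α} {r : Rule α} (h : r ∈ P) : r.hset ⊆ P.hset :=
  Set.subset_biUnion_of_mem h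

lemma hset_mono {P R : Program α} (h : P ⊆ R) : P.hset ⊆ R.hset :=
  Set.iUnion₂_subset fun r hr => rule_hset_subset (h hr)

lemma reduct_horn {P : Program α} (Y : Set α) : (P.reduct Y).Horn := by
  rintro r' ⟨r, hr, -, rfl⟩; rfl

lemma reduct_mono {P : Program α} (hP : P.Mono) (Y : Set α) : (P.reduct Y).Mono := by
  rintro r' ⟨r, hr, -, rfl⟩
  exact ⟨(hP r hr).1, (hP r hr).2.1, fun A hA => absurd hA (Set.notMem_empty A)⟩

lemma isModel_reduct_iff {P : Program α} {Y : Set α} :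
    (P.reduct Y).IsModel Y ↔ P.IsModel Y := by
  constructor
  · intro h r hr hb
    exact h r.pos_part ⟨r, hr, hb.2, rfl⟩ ⟨hb.1, fun A hA => absurd hA (Set.notMem_empty A)⟩
  · rintro h r' ⟨r, hr, hneg, rfl⟩ hb
    exact h r hr ⟨hb.1, hneg⟩

/-- Monotone transfinite sequences from incremental + limit-continuity. -/
lemma mono_of_incr_limit (f : Ordinal.{u} → Set α)
    (incr : ∀ o, f o ⊆ f (o + 1))
    (lim : ∀ o : Ordinal.{u}, Order.IsSuccLimit o → f o = ⋃ β < o, f β) :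
    ∀ o o' : Ordinal.{u}, o ≤ o' → f o ⊆ f o' := by
  intro o o'
  induction o' using Ordinal.limitRecOn with
  | zero => intro h; rw [nonpos_iff_eq_zero.mp h]
  | add_one p ih =>
      intro h
      rcases eq_or_lt_of_le h with rfl | hlt
      · exact subset_rfl
      · have h1 : o ≤ p := Order.lt_add_one_iff.mp hlt
        have h2 := incr p
        exact (ih h1).trans h2
  | limit l hl ih =>
      intro h
      rcases eq_or_lt_of_le h with rfl | hlt
      · exact subset_rfl
      · rw [lim l hl]
        exact Set.subset_biUnion_of_mem hlt

lemma exists_eq_iUnion (f : Ordinal.{u} → Set α)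
    (mono : ∀ o o' : Ordinal.{u}, o ≤ o' → f o ⊆ f o') :
    ∃ o, f o = ⋃ o', f o' := by
  classical
  have h : ∀ a : (⋃ o', f o'), ∃ o, (a : α) ∈ f o := fun a => Set.mem_iUnion.mp a.2
  let g : (⋃ o', f o') → Ordinal.{u} := fun a => (h a).choose
  refine ⟨iSup g, Set.Subset.antisymm (Set.subset_iUnion f _) ?_⟩
  intro x hx
  exact mono _ _ (Ordinal.le_iSup g (⟨x, hx⟩ : (⋃ o', f o'))) (h ⟨x, hx⟩).choose_spec

lemma derivable_fix {P : Program α} {M : Set α} (h : P.Derivable M) :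
    M ⊆ (P.app M).hset ∧ ∀ r ∈ P.app M, Constraint.Sat M r.head := by
  obtain ⟨t, ht⟩ := h
  obtain ⟨o, ho⟩ := exists_eq_iUnion t.X (mono_of_incr_limit t.X t.incr t.limit)
  have h1 : t.X o = M := by rw [ho]; exact ht
  have h2 : t.X (o + 1) = M := by
    refine Set.Subset.antisymm ?_ (h1 ▸ t.incr o)
    rw [← ht]; exact Set.subset_iUnion t.X (o + 1)
  have h3 := t.step o
  rw [h1, h2] at h3
  exact h3

end Aux


section StableIff

variable {α : Type u}

lemma canSeq_zero (P : Program α) (M : Set α) : canSeq P M 0 = ∅ := by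
  unfold canSeq; rw [Ordinal.limitRecOn_zero]

lemma canSeq_succ (P : Program α) (M : Set α) (o : Ordinal.{u}) :
    canSeq P M (o + 1) = (P.app (canSeq P M o)).hset ∩ M := by
  unfold canSeq; rw [Ordinal.add_one_eq_succ, Ordinal.limitRecOn_succ]

lemma canSeq_limit (P : Program α) (M : Set α) {o : Ordinal.{u}} (h : Order.IsSuccLimit o) :
    canSeq P M o = ⋃ β < o, canSeq P M β := by
  unfold canSeq; rw [Ordinal.limitRecOn_limit _ _ _ _ h]

lemma canSeq_subset (P : Program α) (M : Set α) : ∀ o : Ordinal.{u}, canSeq P M o ⊆ M := by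
  intro o
  induction o using Ordinal.limitRecOn with
  | zero => rw [canSeq_zero]; exact Set.empty_subset M
  | add_one p _ =>
      rw [canSeq_succ]; exact Set.inter_subset_right
  | limit l hl ih =>
      rw [canSeq_limit P M hl]; exact Set.iUnion₂_subset ih

lemma canSeq_incr {P : Program α} (hH : P.Horn) (hm : P.Mono) (M : Set α) :
    ∀ o : Ordinal.{u}, canSeq P M o ⊆ canSeq P M (o + 1) := by
  intro o
  induction o using Ordinal.limitRecOn with
  | zero => rw [canSeq_zero]; exact Set.empty_subset _
  | add_one p ih =>
      rw [canSeq_succ, canSeq_succ]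
      exact Set.inter_subset_inter (hset_mono (app_mono hH hm ih)) subset_rfl
  | limit l hl ih =>
      rw [canSeq_succ]
      rw [canSeq_limit P M hl]
      refine Set.iUnion₂_subset fun β hβ => ?_
      have h1 : canSeq P M β ⊆ ⋃ β' < l, canSeq P M β' :=
        Set.subset_biUnion_of_mem hβ
      have h2 := ih β hβ
      rw [canSeq_succ] at h2
      exact h2.trans (Set.inter_subset_inter (hset_mono (app_mono hH hm h1)) subset_rfl)

lemma SE_self_iff {P : Program α} {Y : Set α} : P.SE Y Y ↔ P.IsModel Y := by
  constructor
  · rintro ⟨-, h, -⟩; exact h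
  · intro h
    exact ⟨subset_rfl, h, subset_rfl, isModel_reduct_iff.mpr h, Set.inter_subset_left⟩

/-- The key characterization of stability via SE-models. -/
theorem stable_iff {P : Program α} (hP : P.Mono) (M : Set α) :
    P.Stable M ↔ (P.SE M M ∧ ∀ X, P.SE X M → X = M) := by
  have hH : (P.reduct M).Horn := reduct_horn M
  have hM' : (P.reduct M).Mono := reduct_mono hP M
  constructor
  · intro hst
    obtain ⟨t, ht⟩ := hst
    have hfix := derivable_fix (⟨t, ht⟩ : (P.reduct M).Derivable M)
    have hmodred : (P.reduct M).IsModel M := fun r hr hb => hfix.2 r ⟨hr, hb⟩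
    have hmod : P.IsModel M := isModel_reduct_iff.mp hmodred
    refine ⟨SE_self_iff.mpr hmod, ?_⟩
    rintro X ⟨hXM, -, -, hXmod, hXmax⟩
    refine Set.Subset.antisymm hXM ?_
    have key : ∀ o : Ordinal.{u}, t.X o ⊆ X := by
      intro o
      induction o using Ordinal.limitRecOn with
      | zero => rw [t.zero]; exact Set.empty_subset X
      | add_one p ih =>
          have hstep := t.step p
          have hsub1 : t.X (p + 1) ⊆ ((P.reduct M).app (t.X p)).hset := hstep.1
          have hsub2 : ((P.reduct M).app (t.X p)).hset ⊆ ((P.reduct M).app X).hset :=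
            hset_mono (app_mono hH hM' ih)
          have hsub3 : t.X (p + 1) ⊆ M :=
            (Set.subset_iUnion t.X (p + 1)).trans ht.le
          intro x hx
          exact hXmax ⟨hsub3 hx, hsub2 (hsub1 hx)⟩
      | limit l hl ih =>
          rw [t.limit l hl]; exact Set.iUnion₂_subset ih
    rw [← ht]; exact Set.iUnion_subset key
  · rintro ⟨hSE, huniq⟩
    have hmod : P.IsModel M := SE_self_iff.mp hSE
    have hmodred : (P.reduct M).IsModel M := isModel_reduct_iff.mpr hmod
    set P' := P.reduct M with hP'
    set C : Ordinal.{u} → Set α := canSeq P' M with hC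
    have hincr := canSeq_incr hH hM' M
    have hlim : ∀ o : Ordinal.{u}, Order.IsSuccLimit o → C o = ⋃ β < o, C β :=
      fun o h => canSeq_limit P' M h
    have hCM := canSeq_subset P' M
    have hstep : ∀ o : Ordinal.{u}, C (o + 1) ∈ P'.Tnd (C o) := by
      intro o
      refine ⟨?_, ?_⟩
      · rw [hC, canSeq_succ]; exact Set.inter_subset_left
      · intro r hr
        have hrM : r ∈ P'.app M := app_mono hH hM' (hCM o) hr
        have hsatM : Constraint.Sat M r.head := hmodred r hrM.1 hrM.2
        have hdom : r.head.dom ⊆ (P'.app (C o)).hset := rule_hset_subset hr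
        refine (sat_congr (M := C (o + 1)) (N := M) ?_).mpr hsatM
        rw [hC, canSeq_succ]
        ext x
        simp only [Set.mem_inter_iff]
        exact ⟨fun h => ⟨h.1.2, h.2⟩, fun h => ⟨⟨hdom h.2, h.1⟩, h.2⟩⟩
    let t : PComputation P' :=
      { X := C
        zero := canSeq_zero P' M
        incr := hincr
        step := hstep
        limit := hlim }
    have hRmono := mono_of_incr_limit C hincr hlim
    obtain ⟨o, ho⟩ := exists_eq_iUnion C hRmono
    set R : Set α := ⋃ o', C o' with hR
    have hfixR : R = (P'.app R).hset ∩ M := by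
      have h1 : C (o + 1) = R := by
        refine Set.Subset.antisymm ?_ ?_
        · rw [hR]; exact Set.subset_iUnion C (o + 1)
        · rw [← ho]; exact hincr o
      calc R = C (o + 1) := h1.symm
        _ = (P'.app (C o)).hset ∩ M := canSeq_succ P' M o
        _ = (P'.app R).hset ∩ M := by rw [ho]
    have hRM : R ⊆ M := Set.iUnion_subset hCM
    have hRse : P.SE R M := by
      refine ⟨hRM, hmod, hRM, ?_, ?_⟩
      · intro r hr hb
        have hrR : r ∈ P'.app R := ⟨hr, hb⟩
        have hbM : r.BodySat M := bodySat_mono (hH r hr) (hM' r hr).2.1 hRM hb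
        have hsatM : Constraint.Sat M r.head := hmodred r hr hbM
        have hdom : r.head.dom ⊆ (P'.app R).hset := rule_hset_subset hrR
        refine (sat_congr (M := R) (N := M) ?_).mpr hsatM
        conv_lhs => rw [hfixR]
        ext x
        simp only [Set.mem_inter_iff]
        exact ⟨fun h => ⟨h.1.2, h.2⟩, fun h => ⟨⟨hdom h.2, h.1⟩, h.2⟩⟩
      · intro x hx
        rw [hfixR]; exact ⟨hx.2, hx.1⟩
    have hReq : R = M := huniq R hRse
    exact ⟨t, hReq⟩

end StableIff


section Algebra

variable {α : Type u}

lemma isModel_union {P R : Program α} {Y : Set α} :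
    (P ∪ R).IsModel Y ↔ P.IsModel Y ∧ R.IsModel Y := by
  constructor
  · intro h
    exact ⟨fun r hr => h r (Or.inl hr), fun r hr => h r (Or.inr hr)⟩
  · rintro ⟨h1, h2⟩ r (hr | hr)
    exacts [h1 r hr, h2 r hr]

lemma reduct_union (P R : Program α) (Y : Set α) :
    (P ∪ R).reduct Y = P.reduct Y ∪ R.reduct Y := by
  ext r'
  constructor
  · rintro ⟨r, hr | hr, hneg, rfl⟩
    exacts [Or.inl ⟨r, hr, hneg, rfl⟩, Or.inr ⟨r, hr, hneg, rfl⟩]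
  · rintro (⟨r, hr, hneg, rfl⟩ | ⟨r, hr, hneg, rfl⟩)
    exacts [⟨r, Or.inl hr, hneg, rfl⟩, ⟨r, Or.inr hr, hneg, rfl⟩]

lemma app_union (P R : Program α) (X : Set α) :
    (P ∪ R).app X = P.app X ∪ R.app X := by
  ext r
  constructor
  · rintro ⟨hr | hr, hb⟩
    exacts [Or.inl ⟨hr, hb⟩, Or.inr ⟨hr, hb⟩]
  · rintro (⟨hr, hb⟩ | ⟨hr, hb⟩)
    exacts [⟨Or.inl hr, hb⟩, ⟨Or.inr hr, hb⟩]

lemma hset_union (P R : Program α) : (P ∪ R).hset = P.hset ∪ R.hset :=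
  Set.biUnion_union P R Rule.hset

lemma MMax_union {P R : Program α} {M N : Set α} :
    (P ∪ R).MMax M N ↔ P.MMax M N ∧ R.MMax M N := by
  unfold Program.MMax
  rw [isModel_union, app_union, hset_union, Set.inter_union_distrib_left,
    Set.union_subset_iff]
  tauto

lemma SE_union {P R : Program α} {X Y : Set α} :
    (P ∪ R).SE X Y ↔ P.SE X Y ∧ R.SE X Y := by
  unfold Program.SE
  rw [reduct_union, isModel_union, MMax_union]
  tauto

lemma isModel_fact {D Y : Set α} : (({factRule D} : Program α)).IsModel Y ↔ D ⊆ Y := by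
  constructor
  · intro h
    have hb : (factRule D).BodySat Y :=
      ⟨fun A hA => absurd hA (Set.notMem_empty A), fun A hA => absurd hA (Set.notMem_empty A)⟩
    have := h (factRule D) rfl hb
    have h2 : Y ∩ D = D := this
    exact Set.inter_eq_right.mp h2
  · intro h r hr _
    rw [Set.mem_singleton_iff] at hr; subst hr
    show Y ∩ D ∈ ({D} : Set (Set α))
    rw [Set.inter_eq_right.mpr h]
    rfl

lemma reduct_fact (D Y : Set α) :
    (({factRule D} : Program α)).reduct Y = {factRule D} := by
  ext r'
  constructor
  · rintro ⟨r, hr, -, rfl⟩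
    rw [Set.mem_singleton_iff] at hr; subst hr
    rfl
  · intro hr
    rw [Set.mem_singleton_iff] at hr; subst hr
    exact ⟨factRule D, rfl, fun A hA => absurd hA (Set.notMem_empty A), rfl⟩

lemma app_fact (D X : Set α) : (({factRule D} : Program α)).app X = {factRule D} := by
  ext r
  constructor
  · rintro ⟨hr, -⟩; exact hr
  · intro hr
    have hr' := hr
    rw [Set.mem_singleton_iff] at hr'; subst hr'
    exact ⟨hr, fun A hA => absurd hA (Set.notMem_empty A),
      fun A hA => absurd hA (Set.notMem_empty A)⟩

lemma hset_fact (D : Set α) : (({factRule D} : Program α)).hset = D := by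
  unfold Program.hset
  rw [Set.biUnion_singleton]
  rfl

lemma SE_fact {D X Y : Set α} :
    (({factRule D} : Program α)).SE X Y ↔ D ⊆ X ∧ X ⊆ Y := by
  unfold Program.SE Program.MMax
  rw [reduct_fact, isModel_fact, isModel_fact, app_fact, hset_fact]
  constructor
  · rintro ⟨h1, -, -, h4, -⟩; exact ⟨h4, h1⟩
  · rintro ⟨h1, h2⟩
    exact ⟨h2, h1.trans h2, h2, h1, fun x hx => h1 hx.2⟩

lemma factRule_mono (D : Set α) : (({factRule D}) : Program α).Mono := by
  intro r hr
  rw [Set.mem_singleton_iff] at hr; subst hr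
  refine ⟨?_, fun A hA => absurd hA (Set.notMem_empty A),
    fun A hA => absurd hA (Set.notMem_empty A)⟩
  intro W Z hW hWZ hZ
  have hW' : W = D := hW
  show Z ∈ ({D} : Set (Set α))
  rw [Set.mem_singleton_iff]
  exact Set.Subset.antisymm hZ (hW' ▸ hWZ)

lemma union_mono {P R : Program α} (hP : P.Mono) (hR : R.Mono) : (P ∪ R).Mono :=
  fun r hr => hr.elim (hP r) (hR r)

end Algebra


section UEmax

variable {α : Type u}

lemma trace_inter {W W' A d : Set α} (h3 : W' ∩ A = W ∩ A) (hd : d ⊆ A) :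
    W' ∩ d = W ∩ d := by
  have h := Set.ext_iff.mp h3
  ext x
  have hx := h x
  simp only [Set.mem_inter_iff] at hx ⊢
  exact ⟨fun ⟨a, b⟩ => ⟨(hx.mp ⟨a, hd b⟩).1, b⟩, fun ⟨a, b⟩ => ⟨(hx.mpr ⟨a, hd b⟩).1, b⟩⟩

lemma rule_atoms_subset {P : Program α} {r : Rule α} (hr : r ∈ P) : r.atoms ⊆ P.atoms :=
  Set.subset_biUnion_of_mem hr

lemma dom_subset_atoms_head {P : Program α} {r : Rule α} (hr : r ∈ P) :
    r.head.dom ⊆ P.atoms := by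
  have h1 : r.head.dom ⊆ r.atoms := by
    unfold Rule.atoms
    exact Set.subset_union_left.trans Set.subset_union_left
  exact h1.trans (rule_atoms_subset hr)

lemma dom_subset_atoms_pos {P : Program α} {r : Rule α} (hr : r ∈ P) {A : Constraint α}
    (hA : A ∈ r.pos) : A.dom ⊆ P.atoms := by
  have h1 : A.dom ⊆ r.atoms := by
    unfold Rule.atoms
    exact (Set.subset_biUnion_of_mem hA).trans
      (Set.subset_union_right.trans Set.subset_union_left)
  exact h1.trans (rule_atoms_subset hr)

lemma SE_invar {Q : Program α} {W W' Y : Set α} (h : Q.SE W Y)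
    (h1 : W ⊆ W') (h2 : W' ⊆ Y) (h3 : W' ∩ Q.atoms = W ∩ Q.atoms) : Q.SE W' Y := by
  obtain ⟨hWY, hmod, hWY', hWmod, hWmax⟩ := h
  have hdom : ∀ r' ∈ Q.reduct Y, r'.head.dom ⊆ Q.atoms ∧ ∀ A ∈ r'.pos, A.dom ⊆ Q.atoms := by
    rintro r' ⟨r, hr, -, rfl⟩
    constructor
    · show r.head.dom ⊆ Q.atoms
      exact dom_subset_atoms_head hr
    · show ∀ A ∈ r.pos, A.dom ⊆ Q.atoms
      exact fun A hA => dom_subset_atoms_pos hr hA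
  have hbody : ∀ r' ∈ Q.reduct Y, (r'.BodySat W' ↔ r'.BodySat W) := by
    intro r' hr'
    have hneg : r'.neg = ∅ := reduct_horn Y r' hr'
    unfold Rule.BodySat
    rw [hneg]
    simp only [Set.mem_empty_iff_false, false_implies, implies_true, and_true]
    constructor
    · intro hb A hA
      exact (sat_congr (trace_inter h3 ((hdom r' hr').2 A hA))).mp (hb A hA)
    · intro hb A hA
      exact (sat_congr (trace_inter h3 ((hdom r' hr').2 A hA))).mpr (hb A hA)
  have happ : (Q.reduct Y).app W' = (Q.reduct Y).app W := by
    ext r'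
    show r' ∈ Q.reduct Y ∧ r'.BodySat W' ↔ r' ∈ Q.reduct Y ∧ r'.BodySat W
    exact and_congr_right fun hr' => hbody r' hr'
  refine ⟨h2, hmod, h2, ?_, ?_⟩
  · intro r' hr' hb
    have hs := hWmod r' hr' ((hbody r' hr').mp hb)
    exact (sat_congr (trace_inter h3 (hdom r' hr').1)).mpr hs
  · rw [happ]; exact hWmax.trans h1

lemma exists_ue_above {Q : Program α} (hfinA : Q.atoms.Finite) {Z Y : Set α}
    (hZ : Q.SE Z Y) (hne : Z ≠ Y) : ∃ Z', Q.UE Z' Y ∧ Z ⊆ Z' ∧ Z' ≠ Y := by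
  classical
  set A := Q.atoms with hA
  have hZY : Z ⊆ Y := hZ.1
  by_cases hcase : Z ∩ A = Y ∩ A
  · obtain ⟨a, haY, haZ⟩ : ∃ a, a ∈ Y ∧ a ∉ Z := by
      by_contra hc; push_neg at hc; exact hne (Set.Subset.antisymm hZY hc)
    have haA : a ∉ A := by
      intro ha
      have h1 : a ∈ Y ∩ A := ⟨haY, ha⟩
      rw [← hcase] at h1
      exact haZ h1.1
    have hZsub : Z ⊆ Y \ {a} := fun z hz =>
      ⟨hZY hz, fun h => haZ (by rwa [Set.mem_singleton_iff.mp h] at hz)⟩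
    have htr : (Y \ {a}) ∩ A = Z ∩ A := by
      rw [hcase]
      ext x
      simp only [Set.mem_inter_iff, Set.mem_diff, Set.mem_singleton_iff]
      constructor
      · rintro ⟨⟨hx, -⟩, hxa⟩; exact ⟨hx, hxa⟩
      · rintro ⟨hx, hxa⟩
        exact ⟨⟨hx, fun hh => haA (hh ▸ hxa)⟩, hxa⟩
    have hse : Q.SE (Y \ {a}) Y := SE_invar hZ hZsub Set.diff_subset htr
    refine ⟨Y \ {a}, ⟨hse, ?_⟩, hZsub, ?_⟩
    · intro X3 hX3 hsub
      by_cases hmem : a ∈ X3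
      · right
        refine Set.Subset.antisymm hX3.1 fun y hy => ?_
        by_cases hya : y = a
        · exact hya ▸ hmem
        · exact hsub ⟨hy, hya⟩
      · left
        refine Set.Subset.antisymm hsub fun x hx => ?_
        exact ⟨hX3.1 hx, fun hh => hmem (by rwa [Set.mem_singleton_iff.mp hh] at hx)⟩
    · intro hc
      rw [← hc] at haY
      exact haY.2 rfl
  · set T : Set (Set α) := {B | ∃ W, Q.SE W Y ∧ Z ⊆ W ∧ W ∩ A = B ∧ B ≠ Y ∩ A} with hT
    have hTfin : T.Finite := by
      refine hfinA.finite_subsets.subset ?_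
      rintro B ⟨W, -, -, rfl, -⟩
      exact Set.inter_subset_right
    have hTne : T.Nonempty := ⟨Z ∩ A, Z, hZ, subset_rfl, rfl, hcase⟩
    obtain ⟨B₀, hB₀, hmax⟩ := Set.Finite.exists_maximalFor id T hTfin hTne
    obtain ⟨W₀, hW₀se, hZW₀, hW₀A, hB₀ne⟩ := hB₀
    have hW₀Y : W₀ ⊆ Y := hW₀se.1
    have htr : (W₀ ∪ (Y \ A)) ∩ A = W₀ ∩ A := by
      rw [Set.union_inter_distrib_right, Set.diff_inter_self, Set.union_empty]
    have hsubY : W₀ ∪ (Y \ A) ⊆ Y := Set.union_subset hW₀Y Set.diff_subset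
    have hse : Q.SE (W₀ ∪ (Y \ A)) Y :=
      SE_invar hW₀se Set.subset_union_left hsubY (by rw [htr])
    refine ⟨W₀ ∪ (Y \ A), ⟨hse, ?_⟩, hZW₀.trans Set.subset_union_left, ?_⟩
    · intro X3 hX3 hsub
      by_cases hX3A : X3 ∩ A = Y ∩ A
      · right
        refine Set.Subset.antisymm hX3.1 fun y hy => ?_
        by_cases hyA : y ∈ A
        · have : y ∈ Y ∩ A := ⟨hy, hyA⟩
          rw [← hX3A] at this
          exact this.1
        · exact hsub (Or.inr ⟨hy, hyA⟩)
      · have hX3T : X3 ∩ A ∈ T :=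
          ⟨X3, hX3, (hZW₀.trans Set.subset_union_left).trans hsub, rfl, hX3A⟩
        have hB₀sub : B₀ ⊆ X3 ∩ A := by
          rw [← hW₀A]
          intro w hw
          exact ⟨hsub (Or.inl hw.1), hw.2⟩
        have hB₀eq : B₀ = X3 ∩ A := le_antisymm hB₀sub (hmax hX3T hB₀sub)
        left
        refine Set.Subset.antisymm hsub fun x hx => ?_
        by_cases hxA : x ∈ A
        · have : x ∈ X3 ∩ A := ⟨hx, hxA⟩
          rw [← hB₀eq, ← hW₀A] at this
          exact Or.inl this.1
        · exact Or.inr ⟨hX3.1 hx, hxA⟩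
    · intro hc
      apply hB₀ne
      rw [← hW₀A, ← htr, hc]

end UEmax


section Main

variable {α : Type u}

lemma model_iff_stable_self {P : Program α} (hP : P.Mono) (Y : Set α) :
    (P ∪ {factRule Y}).Stable Y ↔ P.IsModel Y := by
  rw [stable_iff (union_mono hP (factRule_mono Y))]
  constructor
  · rintro ⟨hse, -⟩
    exact SE_self_iff.mp (SE_union.mp hse).1
  · intro h
    refine ⟨SE_union.mpr ⟨SE_self_iff.mpr h, SE_fact.mpr ⟨subset_rfl, subset_rfl⟩⟩, ?_⟩
    intro X hX
    obtain ⟨hP', hF⟩ := SE_union.mp hX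
    exact Set.Subset.antisymm hP'.1 (SE_fact.mp hF).1

lemma UE_self {P : Program α} {Y : Set α} (h : P.IsModel Y) : P.UE Y Y :=
  ⟨SE_self_iff.mpr h, fun X' hX' hs => Or.inr (Set.Subset.antisymm hX'.1 hs)⟩

lemma ue_imp {P Q : Program α} (hP : P.Mono) (hQ : Q.Mono) (hfinQ : Q.atoms.Finite)
    (hu : UnifEq P Q) {X Y : Set α} (h : P.UE X Y) : Q.UE X Y := by
  have hmodels : ∀ Z : Set α, P.IsModel Z ↔ Q.IsModel Z := fun Z =>
    (model_iff_stable_self hP Z).symm.trans ((hu Z Z).trans (model_iff_stable_self hQ Z))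
  have hSE := h.1
  have hXsubY : X ⊆ Y := hSE.1
  have hYmodP : P.IsModel Y := hSE.2.1
  have hYmodQ : Q.IsModel Y := (hmodels Y).mp hYmodP
  by_cases hXY : X = Y
  · subst hXY
    exact UE_self hYmodQ
  · have hnotP : ¬ (P ∪ {factRule X}).Stable Y := by
      rw [stable_iff (union_mono hP (factRule_mono X))]
      rintro ⟨-, huniq⟩
      exact hXY (huniq X (SE_union.mpr ⟨hSE, SE_fact.mpr ⟨subset_rfl, hXsubY⟩⟩))
    have hnotQ : ¬ (Q ∪ {factRule X}).Stable Y := fun hc => hnotP ((hu X Y).mpr hc)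
    have hseYY : (Q ∪ {factRule X}).SE Y Y :=
      SE_union.mpr ⟨SE_self_iff.mpr hYmodQ, SE_fact.mpr ⟨hXsubY, subset_rfl⟩⟩
    rw [stable_iff (union_mono hQ (factRule_mono X))] at hnotQ
    push_neg at hnotQ
    obtain ⟨Z, hZse, hZne⟩ := hnotQ hseYY
    obtain ⟨hZQ, hZf⟩ := SE_union.mp hZse
    obtain ⟨Z', hZ'ue, hZZ', hZ'ne⟩ := exists_ue_above hfinQ hZQ hZne
    have hZ'Y : Z' ⊆ Y := hZ'ue.1.1
    have hnotQ2 : ¬ (Q ∪ {factRule Z'}).Stable Y := by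
      rw [stable_iff (union_mono hQ (factRule_mono Z'))]
      rintro ⟨-, huniq⟩
      exact hZ'ne (huniq Z' (SE_union.mpr ⟨hZ'ue.1, SE_fact.mpr ⟨subset_rfl, hZ'Y⟩⟩))
    have hnotP2 : ¬ (P ∪ {factRule Z'}).Stable Y := fun hc => hnotQ2 ((hu Z' Y).mp hc)
    have hseYY2 : (P ∪ {factRule Z'}).SE Y Y :=
      SE_union.mpr ⟨SE_self_iff.mpr hYmodP, SE_fact.mpr ⟨hZ'Y, subset_rfl⟩⟩
    rw [stable_iff (union_mono hP (factRule_mono Z'))] at hnotP2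
    push_neg at hnotP2
    obtain ⟨W, hWse, hWne⟩ := hnotP2 hseYY2
    obtain ⟨hWP, hWf⟩ := SE_union.mp hWse
    have hXZ : X ⊆ Z := (SE_fact.mp hZf).1
    have hZ'W : Z' ⊆ W := (SE_fact.mp hWf).1
    have hXW : X ⊆ W := (hXZ.trans hZZ').trans hZ'W
    rcases h.2 W hWP hXW with h1 | h1
    · have hXZ' : X = Z' :=
        Set.Subset.antisymm (hXZ.trans hZZ') (h1 ▸ hZ'W)
      rw [hXZ']
      exact hZ'ue
    · exact absurd h1 hWne

lemma stable_imp {P Q : Program α} (hP : P.Mono) (hQ : Q.Mono) (hfinQ : Q.atoms.Finite)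
    (hue : ∀ X Y : Set α, P.UE X Y ↔ Q.UE X Y) {D M : Set α}
    (h : (P ∪ {factRule D}).Stable M) : (Q ∪ {factRule D}).Stable M := by
  rw [stable_iff (union_mono hP (factRule_mono D))] at h
  obtain ⟨hMM, huniq⟩ := h
  obtain ⟨hPse, hFse⟩ := SE_union.mp hMM
  have hDM : D ⊆ M := (SE_fact.mp hFse).1
  have hPMmod : P.IsModel M := SE_self_iff.mp hPse
  have hUEQ : Q.UE M M := (hue M M).mp (UE_self hPMmod)
  have hQMmod : Q.IsModel M := SE_self_iff.mp hUEQ.1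
  rw [stable_iff (union_mono hQ (factRule_mono D))]
  refine ⟨SE_union.mpr ⟨SE_self_iff.mpr hQMmod, SE_fact.mpr ⟨hDM, subset_rfl⟩⟩, ?_⟩
  intro X hX
  by_contra hne
  obtain ⟨hXQ, hXf⟩ := SE_union.mp hX
  obtain ⟨Z', hZ'ue, hXZ', hZ'ne⟩ := exists_ue_above hfinQ hXQ hne
  have hZ'P : P.SE Z' M := ((hue Z' M).mpr hZ'ue).1
  exact hZ'ne (huniq Z' (SE_union.mpr
    ⟨hZ'P, SE_fact.mpr ⟨(SE_fact.mp hXf).1.trans hXZ', hZ'P.1⟩⟩))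

end Main

/-- Uniform equivalence is characterized by equality of UE-models
(for programs over finitely many atoms). -/
theorem unif_equiv_iff_ue {α : Type u} (P Q : Program α) (hP : P.Mono) (hQ : Q.Mono)
    (hfin : (P.atoms ∪ Q.atoms).Finite) :
    UnifEq P Q ↔ ∀ X Y : Set α, P.UE X Y ↔ Q.UE X Y := by
  have hfinP : P.atoms.Finite := hfin.subset Set.subset_union_left
  have hfinQ : Q.atoms.Finite := hfin.subset Set.subset_union_right
  constructor
  · intro hu X Y
    exact ⟨ue_imp hP hQ hfinQ hu, ue_imp hQ hP hfinP (fun D M => (hu D M).symm)⟩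
  · intro hue D M
    exact ⟨stable_imp hP hQ hfinQ hue, stable_imp hQ hP hfinP (fun X Y => (hue X Y).symm)⟩
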